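/- arXiv:1202.5908 — 2 statements merged into one kernel-verified Lean document; each statement's English description precedes it below -/
import Mathlib

section
/- Let τ = [x_{i−1},x_i]×[y_{j−1},y_j] be an axis-parallel rectangle with side lengths h_x = x_i − x_{i−1}, h_y = y_j − y_{j−1} and center (x_τ, y_τ) = ((x_{i−1}+x_i)/2, (y_{j−1}+y_j)/2). Let g ∈ C³(τ), let g^I be the bilinear interpolant of g on τ (the unique function of the form a + bx + cy + dxy agreeing with g at the four vertices of τ), and let w be any bilinear function on τ. Then ∫_τ (g − g^I)_x w_x dx dy = ∫_τ g_{xyy} J_τ(y) ( w_x − (2/3)(y − y_τ) w_{xy} ) dx dy, where J_τ(y) = ((y − y_τ)² − h_y²/4)/2. -/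
open MeasureTheory Real Set

noncomputable section

/-- First-order partial derivative in the x-direction. -/
def pdx (f : ℝ × ℝ → ℝ) : ℝ × ℝ → ℝ := fun p => fderiv ℝ f p (1, 0)

/-- First-order partial derivative in the y-direction. -/
def pdy (f : ℝ × ℝ → ℝ) : ℝ × ℝ → ℝ := fun p => fderiv ℝ f p (0, 1)

/-- Mixed partial derivative `∂_x^i ∂_y^j`. -/
def pd (i j : ℕ) (f : ℝ × ℝ → ℝ) : ℝ × ℝ → ℝ := pdx^[i] (pdy^[j] f)

/-- A function is globally a bilinear polynomial `a + bx + cy + dxy`. -/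
def IsBilinear (f : ℝ × ℝ → ℝ) : Prop :=
  ∃ a b c d : ℝ, ∀ p : ℝ × ℝ, f p = a + b * p.1 + c * p.2 + d * (p.1 * p.2)

theorem bilin_hasFDerivAt (f : ℝ × ℝ → ℝ) (a b c d : ℝ)
    (hf : ∀ p : ℝ × ℝ, f p = a + b * p.1 + c * p.2 + d * (p.1 * p.2)) (p : ℝ × ℝ) :
    HasFDerivAt f
      ((b • ContinuousLinearMap.fst ℝ ℝ ℝ + c • ContinuousLinearMap.snd ℝ ℝ ℝ) +
        d • (p.1 • ContinuousLinearMap.snd ℝ ℝ ℝ + p.2 • ContinuousLinearMap.fst ℝ ℝ ℝ)) p := by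
  have h1 : HasFDerivAt (fun q : ℝ × ℝ => q.1 * q.2)
      (p.1 • ContinuousLinearMap.snd ℝ ℝ ℝ + p.2 • ContinuousLinearMap.fst ℝ ℝ ℝ) p :=
    hasFDerivAt_fst.mul hasFDerivAt_snd
  have h2 : HasFDerivAt (fun q : ℝ × ℝ => a + b * q.1 + c * q.2 + d * (q.1 * q.2))
      ((0 + b • ContinuousLinearMap.fst ℝ ℝ ℝ + c • ContinuousLinearMap.snd ℝ ℝ ℝ) +
        d • (p.1 • ContinuousLinearMap.snd ℝ ℝ ℝ + p.2 • ContinuousLinearMap.fst ℝ ℝ ℝ)) p := by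
    exact (((hasFDerivAt_const a p).add ((hasFDerivAt_fst).const_mul b)).add
      ((hasFDerivAt_snd).const_mul c)).add (h1.const_mul d)
  rw [zero_add] at h2
  exact h2.congr_of_eventuallyEq (Filter.Eventually.of_forall fun q => (hf q))

theorem pdx_bilin (f : ℝ × ℝ → ℝ) (a b c d : ℝ)
    (hf : ∀ p : ℝ × ℝ, f p = a + b * p.1 + c * p.2 + d * (p.1 * p.2)) (p : ℝ × ℝ) :
    pdx f p = b + d * p.2 := by
  have h := (bilin_hasFDerivAt f a b c d hf p).fderiv
  simp only [pdx, h]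
  simp [ContinuousLinearMap.smul_apply]

theorem pdy_bilin (f : ℝ × ℝ → ℝ) (a b c d : ℝ)
    (hf : ∀ p : ℝ × ℝ, f p = a + b * p.1 + c * p.2 + d * (p.1 * p.2)) (p : ℝ × ℝ) :
    pdy f p = c + d * p.1 := by
  have h := (bilin_hasFDerivAt f a b c d hf p).fderiv
  simp only [pdy, h]
  simp [ContinuousLinearMap.smul_apply]

theorem contDiff_pdy {n : ℕ} {g : ℝ × ℝ → ℝ} (hg : ContDiff ℝ (n + 1) g) :
    ContDiff ℝ n (pdy g) := by
  have h : ContDiff ℝ n (fderiv ℝ g) := hg.fderiv_right (by norm_cast)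
  exact h.clm_apply contDiff_const

theorem contDiff_pdx {n : ℕ} {g : ℝ × ℝ → ℝ} (hg : ContDiff ℝ (n + 1) g) :
    ContDiff ℝ n (pdx g) := by
  have h : ContDiff ℝ n (fderiv ℝ g) := hg.fderiv_right (by norm_cast)
  exact h.clm_apply contDiff_const

theorem hasDerivAt_fix_y (h : ℝ × ℝ → ℝ) (hh : Differentiable ℝ h) (y x : ℝ) :
    HasDerivAt (fun t => h (t, y)) (pdx h (x, y)) x := by
  have hline : HasDerivAt (fun t : ℝ => (t, y)) ((1 : ℝ), (0 : ℝ)) x :=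
    (hasDerivAt_id x).prodMk (hasDerivAt_const x y)
  exact (hh (x, y)).hasFDerivAt.comp_hasDerivAt x hline

theorem hasDerivAt_fix_x (h : ℝ × ℝ → ℝ) (hh : Differentiable ℝ h) (x y : ℝ) :
    HasDerivAt (fun t => h (x, t)) (pdy h (x, y)) y := by
  have hline : HasDerivAt (fun t : ℝ => (x, t)) ((0 : ℝ), (1 : ℝ)) y :=
    (hasDerivAt_const y x).prodMk (hasDerivAt_id y)
  exact (hh (x, y)).hasFDerivAt.comp_hasDerivAt y hline

/-- FTC in x for a C¹ function of two variables. -/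
theorem integral_pdx (h : ℝ × ℝ → ℝ) (hh : ContDiff ℝ 1 h) (x0 x1 y : ℝ) :
    ∫ x in x0..x1, pdx h (x, y) = h (x1, y) - h (x0, y) := by
  have hcont : Continuous (pdx h) := (contDiff_pdx (n := 0) (by exact_mod_cast hh)).continuous
  exact intervalIntegral.integral_eq_sub_of_hasDerivAt
    (fun x _ => hasDerivAt_fix_y h (hh.differentiable one_ne_zero) y x)
    ((hcont.comp (continuous_id.prodMk continuous_const)).intervalIntegrable x0 x1)

theorem mySetIntegral_prod_symm (f : ℝ × ℝ → ℝ) {s t : Set ℝ} (hf : IntegrableOn f (s ×ˢ t)) :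
    ∫ z in s ×ˢ t, f z = ∫ y in t, ∫ x in s, f (x, y) := by
  rw [Measure.volume_eq_prod] at hf ⊢
  simp only [← Measure.prod_restrict s t, IntegrableOn] at hf ⊢
  exact integral_prod_symm f hf

theorem key1d (y0 y1 bw dw : ℝ) (φ φ1 φ2 : ℝ → ℝ)
    (hφ : ∀ y, HasDerivAt φ (φ1 y) y) (hφ1 : ∀ y, HasDerivAt φ1 (φ2 y) y)
    (hφ1c : Continuous φ1) (hφ2c : Continuous φ2)
    (hφy0 : φ y0 = 0) (hφy1 : φ y1 = 0) :
    ∫ y in y0..y1, φ y * (bw + dw * y) =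
      ∫ y in y0..y1, φ2 y *
        ((((y - (y0 + y1) / 2) ^ 2 - (y1 - y0) ^ 2 / 4) / 2) *
          ((bw + dw * y) - 2 / 3 * (y - (y0 + y1) / 2) * dw)) := by
  set c : ℝ := (y0 + y1) / 2 with hc
  set J : ℝ → ℝ := fun y => ((y - c) ^ 2 - (y1 - y0) ^ 2 / 4) / 2 with hJdef
  set v : ℝ → ℝ := fun y => (bw + dw * y) - 2 / 3 * (y - c) * dw with hvdef
  have hJ : ∀ y, HasDerivAt J (y - c) y := by
    intro y
    have h := ((((hasDerivAt_id y).sub_const c).pow 2).sub_const ((y1 - y0) ^ 2 / 4)).div_const 2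
    refine h.congr_deriv ?_
    simp [id]
  have hv : ∀ y, HasDerivAt v (dw / 3) y := by
    intro y
    have h := ((hasDerivAt_const y bw).add ((hasDerivAt_id y).const_mul dw)).sub
      ((((hasDerivAt_id y).sub_const c).const_mul (2/3)).mul_const dw)
    refine h.congr_deriv ?_
    ring
  have hu : ∀ y, HasDerivAt (fun y => J y * v y) ((y - c) * v y + J y * (dw / 3)) y :=
    fun y => (hJ y).mul (hv y)
  have hu1 : ∀ y, HasDerivAt (fun y => (y - c) * v y + J y * (dw / 3)) (bw + dw * y) y := by
    intro y
    have h := (((hasDerivAt_id y).sub_const c).mul (hv y)).add ((hJ y).mul_const (dw / 3))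
    refine h.congr_deriv ?_
    simp [hvdef, id]
    ring
  have hJy0 : J y0 = 0 := by simp [hJdef, hc]; ring
  have hJy1 : J y1 = 0 := by simp [hJdef, hc]; ring
  have hvc : Continuous v := by fun_prop
  have hJc : Continuous J := by fun_prop
  have hu1c : Continuous (fun y => (y - c) * v y + J y * (dw / 3)) := by fun_prop
  have hψc : Continuous (fun y : ℝ => bw + dw * y) := by fun_prop
  have ibp1 := intervalIntegral.integral_mul_deriv_eq_deriv_mul (fun y _ => hu y)
    (fun y _ => hφ1 y) (hu1c.intervalIntegrable y0 y1) (hφ2c.intervalIntegrable y0 y1)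
  have ibp2 := intervalIntegral.integral_mul_deriv_eq_deriv_mul (fun y _ => hu1 y)
    (fun y _ => hφ y) (hψc.intervalIntegrable y0 y1) (hφ1c.intervalIntegrable y0 y1)
  rw [hφy0, hφy1] at ibp2
  simp only [hJy0, hJy1, zero_mul, mul_zero, zero_sub, sub_zero] at ibp1 ibp2
  have e1 : ∫ y in y0..y1, φ2 y * (J y * v y) = ∫ y in y0..y1, (J y * v y) * φ2 y := by
    simp only [mul_comm]
  have e2 : ∫ y in y0..y1, φ y * (bw + dw * y) = ∫ y in y0..y1, (bw + dw * y) * φ y := by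
    simp only [mul_comm]
  rw [e2, e1, ibp1, ibp2]
  ring

/-- Lin identity (a): for `g ∈ C³(τ)` with bilinear interpolant `g^I` on the rectangle
`τ = [x₀,x₁]×[y₀,y₁]` and any bilinear `w`,
`∫_τ (g−g^I)_x w_x = ∫_τ g_{xyy} J_τ(y) (w_x − (2/3)(y−y_τ) w_{xy})`,
where `J_τ(y) = ((y−y_τ)² − h_y²/4)/2`. -/
theorem lin_identity_a (x0 x1 y0 y1 : ℝ) (hx : x0 < x1) (hy : y0 < y1)
    (g gI w : ℝ × ℝ → ℝ) (hg : ContDiff ℝ 3 g)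
    (hgIbil : IsBilinear gI)
    (h00 : gI (x0, y0) = g (x0, y0)) (h10 : gI (x1, y0) = g (x1, y0))
    (h01 : gI (x0, y1) = g (x0, y1)) (h11 : gI (x1, y1) = g (x1, y1))
    (hwbil : IsBilinear w) :
    ∫ p in Icc x0 x1 ×ˢ Icc y0 y1, pdx (fun q => g q - gI q) p * pdx w p
      = ∫ p in Icc x0 x1 ×ˢ Icc y0 y1,
          pd 1 2 g p * (((p.2 - (y0 + y1) / 2) ^ 2 - (y1 - y0) ^ 2 / 4) / 2) *
            (pdx w p - 2 / 3 * (p.2 - (y0 + y1) / 2) * pd 1 1 w p) := by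
  obtain ⟨ai, bi, ci, di, hgI⟩ := hgIbil
  obtain ⟨aw, bw, cw, dw, hw⟩ := hwbil
  have hg1 : ContDiff ℝ 1 g := hg.of_le (by norm_num)
  have hgd : Differentiable ℝ g := hg1.differentiable one_ne_zero
  have hpdyg : ContDiff ℝ 2 (pdy g) := contDiff_pdy (n := 2) (by exact_mod_cast hg)
  have hpdyyg : ContDiff ℝ 1 (pdy (pdy g)) := contDiff_pdy (n := 1) (by exact_mod_cast hpdyg)
  have hgIC : ContDiff ℝ 1 gI := by
    rw [show gI = _ from funext hgI]; fun_prop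
  have heC1 : ContDiff ℝ 1 (fun q => g q - gI q) := hg1.sub hgIC
  have hpdxw : ∀ p : ℝ × ℝ, pdx w p = bw + dw * p.2 := pdx_bilin w aw bw cw dw hw
  have hpd11w : ∀ p : ℝ × ℝ, pd 1 1 w p = dw := by
    intro p
    show pdx (pdy w) p = dw
    have h1 : ∀ q : ℝ × ℝ, pdy w q = cw + dw * q.1 + 0 * q.2 + 0 * (q.1 * q.2) := fun q => by
      rw [pdy_bilin w aw bw cw dw hw q]; ring
    rw [pdx_bilin (pdy w) cw dw 0 0 h1 p]; ring
  have hpdxe : ∀ p : ℝ × ℝ, pdx (fun q => g q - gI q) p = pdx g p - (bi + di * p.2) := by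
    intro p
    show fderiv ℝ (fun q => g q - gI q) p (1, 0) = _
    rw [fderiv_fun_sub (hgd p) (hgIC.differentiable one_ne_zero p)]
    simp only [ContinuousLinearMap.sub_apply]
    rw [show fderiv ℝ gI p (1, 0) = pdx gI p from rfl, pdx_bilin gI ai bi ci di hgI p]
    rfl
  have hpdxgC : Continuous (pdx g) := (contDiff_pdx (n := 0) (by exact_mod_cast hg1)).continuous
  have hpd12C : Continuous (pd 1 2 g) := by
    show Continuous (pdx (pdy (pdy g)))
    exact (contDiff_pdx (n := 0) (by exact_mod_cast hpdyyg)).continuous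
  have hpdygC : Continuous (pdy g) := hpdyg.continuous
  have hpdyygC : Continuous (pdy (pdy g)) := hpdyyg.continuous
  -- the two integrands are continuous, hence integrable on the rectangle
  have hF1eq : (fun p : ℝ × ℝ => pdx (fun q => g q - gI q) p * pdx w p)
      = fun p : ℝ × ℝ => (pdx g p - (bi + di * p.2)) * (bw + dw * p.2) :=
    funext fun p => by rw [hpdxe p, hpdxw p]
  have hF1c : Continuous (fun p : ℝ × ℝ => pdx (fun q => g q - gI q) p * pdx w p) := by
    rw [hF1eq]
    exact (hpdxgC.sub (by fun_prop)).mul (by fun_prop)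
  have hF2eq : (fun p : ℝ × ℝ => pd 1 2 g p * (((p.2 - (y0 + y1) / 2) ^ 2 - (y1 - y0) ^ 2 / 4) / 2)
        * (pdx w p - 2 / 3 * (p.2 - (y0 + y1) / 2) * pd 1 1 w p))
      = fun p : ℝ × ℝ => pd 1 2 g p * (((p.2 - (y0 + y1) / 2) ^ 2 - (y1 - y0) ^ 2 / 4) / 2)
        * ((bw + dw * p.2) - 2 / 3 * (p.2 - (y0 + y1) / 2) * dw) :=
    funext fun p => by rw [hpdxw p, hpd11w p]
  have hF2c : Continuous (fun p : ℝ × ℝ =>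
      pd 1 2 g p * (((p.2 - (y0 + y1) / 2) ^ 2 - (y1 - y0) ^ 2 / 4) / 2)
        * (pdx w p - 2 / 3 * (p.2 - (y0 + y1) / 2) * pd 1 1 w p)) := by
    rw [hF2eq]
    exact (hpd12C.mul (by fun_prop)).mul (by fun_prop)
  have hInt1 : IntegrableOn (fun p : ℝ × ℝ => pdx (fun q => g q - gI q) p * pdx w p)
      (Icc x0 x1 ×ˢ Icc y0 y1) :=
    hF1c.continuousOn.integrableOn_compact (isCompact_Icc.prod isCompact_Icc)
  have hInt2 : IntegrableOn (fun p : ℝ × ℝ =>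
      pd 1 2 g p * (((p.2 - (y0 + y1) / 2) ^ 2 - (y1 - y0) ^ 2 / 4) / 2)
        * (pdx w p - 2 / 3 * (p.2 - (y0 + y1) / 2) * pd 1 1 w p))
      (Icc x0 x1 ×ˢ Icc y0 y1) :=
    hF2c.continuousOn.integrableOn_compact (isCompact_Icc.prod isCompact_Icc)
  -- abbreviations for the 1-D reduction
  set φ : ℝ → ℝ := fun y => (g (x1, y) - g (x0, y)) - (bi * (x1 - x0) + di * (x1 - x0) * y)
    with hφdef
  set φ1 : ℝ → ℝ := fun y => pdy g (x1, y) - pdy g (x0, y) - di * (x1 - x0) with hφ1def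
  set φ2 : ℝ → ℝ := fun y => pdy (pdy g) (x1, y) - pdy (pdy g) (x0, y) with hφ2def
  -- Step 1: LHS reduces to a 1-D integral
  have hL : ∫ p in Icc x0 x1 ×ˢ Icc y0 y1, pdx (fun q => g q - gI q) p * pdx w p
      = ∫ y in y0..y1, φ y * (bw + dw * y) := by
    rw [mySetIntegral_prod_symm _ hInt1]
    rw [integral_Icc_eq_integral_Ioc, ← intervalIntegral.integral_of_le hy.le]
    refine intervalIntegral.integral_congr fun y _ => ?_
    have step1 : ∀ x : ℝ, pdx (fun q => g q - gI q) (x, y) * pdx w (x, y)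
        = pdx (fun q => g q - gI q) (x, y) * (bw + dw * y) := fun x => by rw [hpdxw]
    rw [integral_congr_ae (Filter.Eventually.of_forall step1), integral_mul_const,
      integral_Icc_eq_integral_Ioc, ← intervalIntegral.integral_of_le hx.le,
      integral_pdx _ heC1 x0 x1 y]
    congr 1
    simp only [hφdef]
    rw [hgI (x1, y), hgI (x0, y)]
    ring
  -- Step 2: RHS reduces to a 1-D integral
  have hR : (∫ p in Icc x0 x1 ×ˢ Icc y0 y1,
        pd 1 2 g p * (((p.2 - (y0 + y1) / 2) ^ 2 - (y1 - y0) ^ 2 / 4) / 2)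
          * (pdx w p - 2 / 3 * (p.2 - (y0 + y1) / 2) * pd 1 1 w p))
      = ∫ y in y0..y1, φ2 y *
          ((((y - (y0 + y1) / 2) ^ 2 - (y1 - y0) ^ 2 / 4) / 2) *
            ((bw + dw * y) - 2 / 3 * (y - (y0 + y1) / 2) * dw)) := by
    rw [mySetIntegral_prod_symm _ hInt2]
    rw [integral_Icc_eq_integral_Ioc, ← intervalIntegral.integral_of_le hy.le]
    refine intervalIntegral.integral_congr fun y _ => ?_
    have step1 : ∀ x : ℝ, pd 1 2 g (x, y) * (((y - (y0 + y1) / 2) ^ 2 - (y1 - y0) ^ 2 / 4) / 2)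
          * (pdx w (x, y) - 2 / 3 * (y - (y0 + y1) / 2) * pd 1 1 w (x, y))
        = pdx (pdy (pdy g)) (x, y) * ((((y - (y0 + y1) / 2) ^ 2 - (y1 - y0) ^ 2 / 4) / 2)
          * ((bw + dw * y) - 2 / 3 * (y - (y0 + y1) / 2) * dw)) := fun x => by
      rw [hpdxw, hpd11w]
      show pdx (pdy (pdy g)) (x, y) * _ * _ = _
      ring
    rw [integral_congr_ae (Filter.Eventually.of_forall step1), integral_mul_const,
      integral_Icc_eq_integral_Ioc, ← intervalIntegral.integral_of_le hx.le,
      integral_pdx _ hpdyyg x0 x1 y]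
  rw [hL, hR]
  -- Step 3: the 1-D identity, by integrating by parts twice
  have hφD : ∀ y, HasDerivAt φ (φ1 y) y := by
    intro y
    have h := ((hasDerivAt_fix_x g hgd x1 y).sub (hasDerivAt_fix_x g hgd x0 y)).sub
      ((hasDerivAt_const y (bi * (x1 - x0))).add ((hasDerivAt_id y).const_mul (di * (x1 - x0))))
    refine h.congr_deriv ?_
    simp [hφ1def]
  have hφ1D : ∀ y, HasDerivAt φ1 (φ2 y) y := by
    intro y
    exact ((hasDerivAt_fix_x (pdy g) (hpdyg.differentiable (by norm_num)) x1 y).sub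
      (hasDerivAt_fix_x (pdy g) (hpdyg.differentiable (by norm_num)) x0 y)).sub_const _
  have hφ1c : Continuous φ1 := by
    apply Continuous.sub
    apply Continuous.sub
    · exact hpdygC.comp (continuous_const.prodMk continuous_id)
    · exact hpdygC.comp (continuous_const.prodMk continuous_id)
    · exact continuous_const
  have hφ2c : Continuous φ2 := by
    apply Continuous.sub
    · exact hpdyygC.comp (continuous_const.prodMk continuous_id)
    · exact hpdyygC.comp (continuous_const.prodMk continuous_id)
  have hφy0 : φ y0 = 0 := by
    simp only [hφdef]
    rw [← h10, ← h00, hgI (x1, y0), hgI (x0, y0)]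
    ring
  have hφy1 : φ y1 = 0 := by
    simp only [hφdef]
    rw [← h11, ← h01, hgI (x1, y1), hgI (x0, y1)]
    ring
  exact key1d y0 y1 bw dw φ φ1 φ2 hφD hφ1D hφ1c hφ2c hφy0 hφy1
end
end

section
/- Let τ = [x_{i−1},x_i]×[y_{j−1},y_j] be an axis-parallel rectangle with side lengths h_x = x_i − x_{i−1}, h_y = y_j − y_{j−1} and center (x_τ, y_τ) = ((x_{i−1}+x_i)/2, (y_{j−1}+y_j)/2). Let g ∈ C³(τ), let g^I be the bilinear interpolant of g on τ, and let w be any bilinear function on τ. Then ∫_τ (g − g^I)_x w dx dy = ∫_τ R(g,w) dx dy + (h_x²/12) ( ∫_{l_2} g_{xx} w dy − ∫_{l_4} g_{xx} w dy ), where l_2 = {x_i}×[y_{j−1},y_j] is the right edge, l_4 = {x_{i−1}}×[y_{j−1},y_j] is the left edge, F_τ(x) = ((x − x_τ)² − h_x²/4)/2, J_τ(y) = ((y − y_τ)² − h_y²/4)/2, and R(g,w) = (1/3) F_τ(x)(x − x_τ) g_{xxx} w_x − (h_x²/12) g_{xxx} w + J_τ(y) g_{xyy} [ w − (x − x_τ)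 w_x − (2/3)(y − y_τ) w_y + (2/3)(x − x_τ)(y − y_τ) w_{xy} ]. -/
open MeasureTheory Real Set
open intervalIntegral

noncomputable section

lemma sliceX {f : ℝ×ℝ→ℝ} (hf : Differentiable ℝ f) (x y : ℝ) :
    HasDerivAt (fun t => f (t, y)) (pdx f (x, y)) x := by
  have h1 : HasDerivAt (fun t : ℝ => ((t, y) : ℝ×ℝ)) ((1:ℝ), (0:ℝ)) x :=
    (hasDerivAt_id x).prodMk (hasDerivAt_const x y)
  exact (hf (x, y)).hasFDerivAt.comp_hasDerivAt x h1

lemma sliceY {f : ℝ×ℝ→ℝ} (hf : Differentiable ℝ f) (x y : ℝ) :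
    HasDerivAt (fun t => f (x, t)) (pdy f (x, y)) y := by
  have h1 : HasDerivAt (fun t : ℝ => ((x, t) : ℝ×ℝ)) ((0:ℝ), (1:ℝ)) y :=
    (hasDerivAt_const y x).prodMk (hasDerivAt_id y)
  exact (hf (x, y)).hasFDerivAt.comp_hasDerivAt y h1

lemma contDiff_pdx_s2 {n : ℕ} {f : ℝ×ℝ→ℝ} (hf : ContDiff ℝ (n+1) f) : ContDiff ℝ n (pdx f) := by
  show ContDiff ℝ n (fun p => (fderiv ℝ f p) (1, 0))
  exact (hf.fderiv_right (m := n) (by norm_cast)).clm_apply contDiff_const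

lemma contDiff_pdy_s2 {n : ℕ} {f : ℝ×ℝ→ℝ} (hf : ContDiff ℝ (n+1) f) : ContDiff ℝ n (pdy f) := by
  show ContDiff ℝ n (fun p => (fderiv ℝ f p) (0, 1))
  exact (hf.fderiv_right (m := n) (by norm_cast)).clm_apply contDiff_const
lemma pdx_poly (a b c d : ℝ) :
    pdx (fun p : ℝ×ℝ => a + b*p.1 + c*p.2 + d*(p.1*p.2)) = fun p => b + d*p.2 := by
  funext p
  have hdiff : Differentiable ℝ (fun p : ℝ×ℝ => a + b*p.1 + c*p.2 + d*(p.1*p.2)) := by fun_prop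
  have h1 := sliceX hdiff p.1 p.2
  have hb : HasDerivAt (fun t:ℝ => b*t) b p.1 := by simpa using (hasDerivAt_id p.1).const_mul b
  have hd : HasDerivAt (fun t:ℝ => d*(t*p.2)) (d*p.2) p.1 := by
    simpa using ((hasDerivAt_id p.1).mul_const p.2).const_mul d
  have h2 : HasDerivAt (fun t : ℝ => a + b*t + c*p.2 + d*(t*p.2)) (b + d*p.2) p.1 :=
    ((hb.const_add a).add_const (c*p.2)).add hd
  have := h1.unique h2
  simpa using this

lemma pdy_poly (a b c d : ℝ) :
    pdy (fun p : ℝ×ℝ => a + b*p.1 + c*p.2 + d*(p.1*p.2)) = fun p => c + d*p.1 := by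
  funext p
  have hdiff : Differentiable ℝ (fun p : ℝ×ℝ => a + b*p.1 + c*p.2 + d*(p.1*p.2)) := by fun_prop
  have h1 := sliceY hdiff p.1 p.2
  have hc : HasDerivAt (fun t:ℝ => c*t) c p.2 := by simpa using (hasDerivAt_id p.2).const_mul c
  have hd : HasDerivAt (fun t:ℝ => d*(p.1*t)) (d*p.1) p.2 := by
    simpa using ((hasDerivAt_id p.2).const_mul p.1).const_mul d
  have h2 : HasDerivAt (fun t : ℝ => a + b*p.1 + c*t + d*(p.1*t)) (c + d*p.1) p.2 :=
    (hc.const_add (a + b*p.1)).add hd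
  have := h1.unique h2
  simpa using this

lemma hasDerivAt_J (y0 y1 : ℝ) (t : ℝ) :
    HasDerivAt (fun t : ℝ => ((t - (y0+y1)/2)^2 - (y1-y0)^2/4)/2) (t - (y0+y1)/2) t := by
  have h1 : HasDerivAt (fun t:ℝ => t - (y0+y1)/2) 1 t := (hasDerivAt_id t).sub_const _
  have h2 : HasDerivAt (fun t:ℝ => (t - (y0+y1)/2)^2) (2*(t - (y0+y1)/2)) t := by
    simpa using h1.fun_pow 2
  have h3 : HasDerivAt (fun t : ℝ => ((t - (y0+y1)/2)^2 - (y1-y0)^2/4)/2) (2*(t - (y0+y1)/2)/2) t :=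
    (h2.sub_const ((y1-y0)^2/4)).div_const 2
  convert h3 using 1; ring

lemma edge_lemma (y0 y1 α β : ℝ) (ε ε' q : ℝ → ℝ)
    (hε : ∀ t, HasDerivAt ε (ε' t) t) (hε' : ∀ t, HasDerivAt ε' (q t) t)
    (hcε' : Continuous ε') (hcq : Continuous q)
    (h0 : ε y0 = 0) (h1 : ε y1 = 0) :
    ∫ t in y0..y1, ε t * (α + β*(t - (y0+y1)/2))
      = ∫ t in y0..y1, (((t - (y0+y1)/2)^2 - (y1-y0)^2/4)/2) * q t * (α + β/3*(t - (y0+y1)/2)) := by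
  have hcε : Continuous ε := by
    refine continuous_iff_continuousAt.2 fun t => (hε t).continuousAt
  set m := (y0+y1)/2 with hm
  have hJ : ∀ t : ℝ, HasDerivAt (fun t : ℝ => ((t - m)^2 - (y1-y0)^2/4)/2) (t - m) t :=
    hasDerivAt_J y0 y1
  have hφ : ∀ t : ℝ, HasDerivAt (fun t : ℝ => α + β/3*(t-m)) (β/3) t := fun t => by
    simpa using (((hasDerivAt_id t).sub_const m).const_mul (β/3)).const_add α
  have hone : ∀ t : ℝ, HasDerivAt (fun t : ℝ => t - m) 1 t := fun t => (hasDerivAt_id t).sub_const m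
  have hJ0 : ((y0 - m)^2 - (y1-y0)^2/4)/2 = 0 := by rw [hm]; ring
  have hJ1 : ((y1 - m)^2 - (y1-y0)^2/4)/2 = 0 := by rw [hm]; ring
  -- FTC1 : d/dt [J φ ε'] ; boundary vanishes since J vanishes
  have FTC1 : ∫ t in y0..y1,
      ((((t-m) * (α + β/3*(t-m)) + (((t - m)^2 - (y1-y0)^2/4)/2)*(β/3)) * ε' t)
        + ((((t - m)^2 - (y1-y0)^2/4)/2) * (α + β/3*(t-m))) * q t)
      = (((y1 - m)^2 - (y1-y0)^2/4)/2) * (α + β/3*(y1-m)) * ε' y1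
        - (((y0 - m)^2 - (y1-y0)^2/4)/2) * (α + β/3*(y0-m)) * ε' y0 := by
    refine integral_eq_sub_of_hasDerivAt (fun t _ => ((hJ t).mul (hφ t)).mul (hε' t)) ?_
    apply Continuous.intervalIntegrable; fun_prop
  -- FTC2 : d/dt [K ε] with K = (t-m)φ + J β/3 ; boundary vanishes since ε vanishes
  have FTC2 : ∫ t in y0..y1,
      ((1 * (α + β/3*(t-m)) + (t-m)*(β/3) + (t-m)*(β/3)) * ε t
        + ((t-m) * (α + β/3*(t-m)) + (((t - m)^2 - (y1-y0)^2/4)/2)*(β/3)) * ε' t)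
      = ((y1-m) * (α + β/3*(y1-m)) + (((y1 - m)^2 - (y1-y0)^2/4)/2)*(β/3)) * ε y1
        - ((y0-m) * (α + β/3*(y0-m)) + (((y0 - m)^2 - (y1-y0)^2/4)/2)*(β/3)) * ε y0 := by
    refine integral_eq_sub_of_hasDerivAt
      (fun t _ => (((hone t).mul (hφ t)).add ((hJ t).mul_const (β/3))).mul (hε t)) ?_
    apply Continuous.intervalIntegrable; fun_prop
  rw [hJ0, hJ1] at FTC1 FTC2
  rw [h0, h1] at FTC2
  simp only [zero_mul, mul_zero, zero_add, add_zero, sub_zero, zero_sub] at FTC1 FTC2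
  have i1 : IntervalIntegrable (fun t =>
      ((t-m) * (α + β/3*(t-m)) + (((t - m)^2 - (y1-y0)^2/4)/2)*(β/3)) * ε' t) volume y0 y1 := by
    apply Continuous.intervalIntegrable; fun_prop
  have i2 : IntervalIntegrable (fun t =>
      ((((t - m)^2 - (y1-y0)^2/4)/2) * (α + β/3*(t-m))) * q t) volume y0 y1 := by
    apply Continuous.intervalIntegrable; fun_prop
  have i3 : IntervalIntegrable (fun t =>
      (1 * (α + β/3*(t-m)) + (t-m)*(β/3) + (t-m)*(β/3)) * ε t) volume y0 y1 := by
    apply Continuous.intervalIntegrable; fun_prop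
  rw [integral_add i1 i2] at FTC1
  rw [integral_add i3 i1] at FTC2
  have e1 : ∫ t in y0..y1, ε t * (α + β*(t - m))
      = ∫ t in y0..y1, (1 * (α + β/3*(t-m)) + (t-m)*(β/3) + (t-m)*(β/3)) * ε t := by
    apply integral_congr; intro t _; ring
  have e2 : ∫ t in y0..y1, (((t - m)^2 - (y1-y0)^2/4)/2) * q t * (α + β/3*(t - m))
      = ∫ t in y0..y1, ((((t - m)^2 - (y1-y0)^2/4)/2) * (α + β/3*(t-m))) * q t := by
    apply integral_congr; intro t _; ring
  rw [e1, e2]; linarith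

lemma interior_lemma (x0 x1 : ℝ) (ε ε' q : ℝ → ℝ)
    (hε : ∀ t, HasDerivAt ε (ε' t) t) (hε' : ∀ t, HasDerivAt ε' (q t) t)
    (hcε' : Continuous ε') (hcq : Continuous q) :
    ∫ t in x0..x1, ε t
      = (∫ t in x0..x1, (((t - (x0+x1)/2)^2 - (x1-x0)^2/4)/2) * q t)
        + (x1-x0)/2 * (ε x1 + ε x0) := by
  have hcε : Continuous ε := continuous_iff_continuousAt.2 fun t => (hε t).continuousAt
  set m := (x0+x1)/2 with hm
  have hJ : ∀ t : ℝ, HasDerivAt (fun t : ℝ => ((t - m)^2 - (x1-x0)^2/4)/2) (t - m) t :=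
    hasDerivAt_J x0 x1
  have hone : ∀ t : ℝ, HasDerivAt (fun t : ℝ => t - m) 1 t := fun t => (hasDerivAt_id t).sub_const m
  have hJ0 : ((x0 - m)^2 - (x1-x0)^2/4)/2 = 0 := by rw [hm]; ring
  have hJ1 : ((x1 - m)^2 - (x1-x0)^2/4)/2 = 0 := by rw [hm]; ring
  have FTC1 : ∫ t in x0..x1, ((t-m) * ε' t + (((t - m)^2 - (x1-x0)^2/4)/2) * q t)
      = (((x1 - m)^2 - (x1-x0)^2/4)/2) * ε' x1 - (((x0 - m)^2 - (x1-x0)^2/4)/2) * ε' x0 := by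
    refine integral_eq_sub_of_hasDerivAt (fun t _ => (hJ t).mul (hε' t)) ?_
    apply Continuous.intervalIntegrable; fun_prop
  have FTC2 : ∫ t in x0..x1, (1 * ε t + (t-m) * ε' t)
      = (x1-m) * ε x1 - (x0-m) * ε x0 := by
    refine integral_eq_sub_of_hasDerivAt (fun t _ => (hone t).mul (hε t)) ?_
    apply Continuous.intervalIntegrable; fun_prop
  rw [hJ0, hJ1] at FTC1
  simp only [zero_mul, sub_zero, zero_sub] at FTC1
  have i1 : IntervalIntegrable (fun t => (t-m) * ε' t) volume x0 x1 := by
    apply Continuous.intervalIntegrable; fun_prop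
  have i2 : IntervalIntegrable (fun t => (((t - m)^2 - (x1-x0)^2/4)/2) * q t) volume x0 x1 := by
    apply Continuous.intervalIntegrable; fun_prop
  have i3 : IntervalIntegrable (fun t => 1 * ε t) volume x0 x1 := by
    apply Continuous.intervalIntegrable; fun_prop
  rw [integral_add i1 i2] at FTC1
  rw [integral_add i3 i1] at FTC2
  have e1 : ∫ t in x0..x1, ε t = ∫ t in x0..x1, 1 * ε t := by
    apply integral_congr; intro t _; ring
  have hb : (x1-m) * ε x1 - (x0-m) * ε x0 = (x1-x0)/2 * (ε x1 + ε x0) := by rw [hm]; ring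
  rw [e1]; linarith

lemma trapezoid (x0 x1 : ℝ) (q q' : ℝ → ℝ)
    (hq : ∀ t, HasDerivAt q (q' t) t) (hcq' : Continuous q') :
    (x1-x0)/2 * (q x1 + q x0)
      = (∫ t in x0..x1, q t) + ∫ t in x0..x1, (t - (x0+x1)/2) * q' t := by
  have hcq : Continuous q := continuous_iff_continuousAt.2 fun t => (hq t).continuousAt
  set m := (x0+x1)/2 with hm
  have hone : ∀ t : ℝ, HasDerivAt (fun t : ℝ => t - m) 1 t := fun t => (hasDerivAt_id t).sub_const m
  have FTC : ∫ t in x0..x1, (1 * q t + (t-m) * q' t)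
      = (x1-m) * q x1 - (x0-m) * q x0 := by
    refine integral_eq_sub_of_hasDerivAt (fun t _ => (hone t).mul (hq t)) ?_
    apply Continuous.intervalIntegrable; fun_prop
  have i1 : IntervalIntegrable (fun t => 1 * q t) volume x0 x1 := by
    apply Continuous.intervalIntegrable; fun_prop
  have i2 : IntervalIntegrable (fun t => (t-m) * q' t) volume x0 x1 := by
    apply Continuous.intervalIntegrable; fun_prop
  rw [integral_add i1 i2] at FTC
  have e1 : ∫ t in x0..x1, q t = ∫ t in x0..x1, 1 * q t := by
    apply integral_congr; intro t _; ring
  have hb : (x1-m) * q x1 - (x0-m) * q x0 = (x1-x0)/2 * (q x1 + q x0) := by rw [hm]; ring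
  rw [e1]; linarith

lemma stepB (x0 x1 : ℝ) (q q' : ℝ → ℝ)
    (hq : ∀ t, HasDerivAt q (q' t) t) (hcq' : Continuous q') :
    ∫ t in x0..x1, 1/3 * (((t - (x0+x1)/2)^2 - (x1-x0)^2/4)/2) * (t - (x0+x1)/2) * q' t
      = -∫ t in x0..x1, ((((t - (x0+x1)/2)^2 - (x1-x0)^2/4)/2) + (x1-x0)^2/12) * q t := by
  have hcq : Continuous q := continuous_iff_continuousAt.2 fun t => (hq t).continuousAt
  set m := (x0+x1)/2 with hm
  have hJ : ∀ t : ℝ, HasDerivAt (fun t : ℝ => 1/3 * (((t - m)^2 - (x1-x0)^2/4)/2)) (1/3 * (t - m)) t :=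
    fun t => (hasDerivAt_J x0 x1 t).const_mul (1/3)
  have hone : ∀ t : ℝ, HasDerivAt (fun t : ℝ => t - m) 1 t := fun t => (hasDerivAt_id t).sub_const m
  have hJ0 : ((x0 - m)^2 - (x1-x0)^2/4)/2 = 0 := by rw [hm]; ring
  have hJ1 : ((x1 - m)^2 - (x1-x0)^2/4)/2 = 0 := by rw [hm]; ring
  have FTC : ∫ t in x0..x1,
      ((1/3 * (t-m) * (t-m) + 1/3 * (((t - m)^2 - (x1-x0)^2/4)/2) * 1) * q t
        + (1/3 * (((t - m)^2 - (x1-x0)^2/4)/2) * (t-m)) * q' t)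
      = (1/3 * (((x1 - m)^2 - (x1-x0)^2/4)/2) * (x1-m)) * q x1
        - (1/3 * (((x0 - m)^2 - (x1-x0)^2/4)/2) * (x0-m)) * q x0 := by
    refine integral_eq_sub_of_hasDerivAt (fun t _ => ((hJ t).mul (hone t)).mul (hq t)) ?_
    apply Continuous.intervalIntegrable; fun_prop
  rw [hJ0, hJ1] at FTC
  simp only [mul_zero, zero_mul, sub_zero, zero_sub] at FTC
  have i1 : IntervalIntegrable (fun t =>
      (1/3 * (t-m) * (t-m) + 1/3 * (((t - m)^2 - (x1-x0)^2/4)/2) * 1) * q t) volume x0 x1 := by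
    apply Continuous.intervalIntegrable; fun_prop
  have i2 : IntervalIntegrable (fun t =>
      (1/3 * (((t - m)^2 - (x1-x0)^2/4)/2) * (t-m)) * q' t) volume x0 x1 := by
    apply Continuous.intervalIntegrable; fun_prop
  rw [integral_add i1 i2] at FTC
  have e1 : ∫ t in x0..x1, 1/3 * (((t - m)^2 - (x1-x0)^2/4)/2) * (t-m) * q' t
      = ∫ t in x0..x1, (1/3 * (((t - m)^2 - (x1-x0)^2/4)/2) * (t-m)) * q' t := by
    apply integral_congr; intro t _; ring
  have e2 : ∫ t in x0..x1, ((((t - m)^2 - (x1-x0)^2/4)/2) + (x1-x0)^2/12) * q t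
      = ∫ t in x0..x1, (1/3 * (t-m) * (t-m) + 1/3 * (((t - m)^2 - (x1-x0)^2/4)/2) * 1) * q t := by
    apply integral_congr; intro t _; rw [hm]; ring
  rw [e1, e2]; linarith

lemma fubini_rect {x0 x1 y0 y1 : ℝ} (hx : x0 ≤ x1) (hy : y0 ≤ y1) {f : ℝ×ℝ→ℝ}
    (hf : Continuous f) :
    ∫ p in Icc x0 x1 ×ˢ Icc y0 y1, f p = ∫ y in y0..y1, ∫ x in x0..x1, f (x, y) := by
  have hint : IntegrableOn f (Icc x0 x1 ×ˢ Icc y0 y1)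
      ((volume : Measure ℝ).prod (volume : Measure ℝ)) := by
    rw [← Measure.volume_eq_prod]
    exact hf.continuousOn.integrableOn_compact (isCompact_Icc.prod isCompact_Icc)
  have key : ∫ p in Icc x0 x1 ×ˢ Icc y0 y1, f p
      = ∫ y in Icc y0 y1, ∫ x in Icc x0 x1, f (x, y) := by
    rw [Measure.volume_eq_prod, ← Measure.prod_restrict]
    exact integral_prod_symm f (by rwa [Measure.prod_restrict])
  have hI : ∀ (a b : ℝ), a ≤ b → ∀ g : ℝ → ℝ, (∫ t in Icc a b, g t) = ∫ t in a..b, g t := by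
    intro a b hab g
    rw [MeasureTheory.integral_Icc_eq_integral_Ioc, intervalIntegral.integral_of_le hab]
  rw [key, hI y0 y1 hy]
  apply intervalIntegral.integral_congr
  intro t _
  exact hI x0 x1 hx _

lemma hasDerivAt_linear (u v t : ℝ) : HasDerivAt (fun s : ℝ => u + v*s) v t := by
  simpa using ((hasDerivAt_id t).const_mul v).const_add u

lemma hasDerivAt_polyX (A B C D y t : ℝ) :
    HasDerivAt (fun s : ℝ => A + B*s + C*y + D*(s*y)) (B + D*y) t := by
  have h1 : HasDerivAt (fun s:ℝ => B*s) B t := by simpa using (hasDerivAt_id t).const_mul B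
  have h2 : HasDerivAt (fun s:ℝ => D*(s*y)) (D*y) t := by
    simpa using ((hasDerivAt_id t).mul_const y).const_mul D
  exact ((h1.const_add A).add_const (C*y)).add h2

lemma hasDerivAt_polyY (A B C D x t : ℝ) :
    HasDerivAt (fun s : ℝ => A + B*x + C*s + D*(x*s)) (C + D*x) t := by
  have h1 : HasDerivAt (fun s:ℝ => C*s) C t := by simpa using (hasDerivAt_id t).const_mul C
  have h2 : HasDerivAt (fun s:ℝ => D*(x*s)) (D*x) t := by
    simpa using ((hasDerivAt_id t).const_mul x).const_mul D
  exact ((h1.const_add (A + B*x)).add h2)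

lemma S2lem (x0 x1 a b c d A B C D y : ℝ) (g : ℝ×ℝ→ℝ)
    (hgd : Differentiable ℝ g) (hgxd : Differentiable ℝ (pdx g))
    (hcg : Continuous g) (hcgx : Continuous (pdx g)) (hcg2 : Continuous (pdx (pdx g))) :
    (∫ x in x0..x1, (pdx g (x,y) - (B + D*y)) * (a + b*x + c*y + d*(x*y)))
      = ((g (x1,y) - (A + B*x1 + C*y + D*(x1*y))) * (a + b*x1 + c*y + d*(x1*y))
          - (g (x0,y) - (A + B*x0 + C*y + D*(x0*y))) * (a + b*x0 + c*y + d*(x0*y)))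
        - (x1-x0)/2 * ((g (x1,y) - (A + B*x1 + C*y + D*(x1*y)))
            + (g (x0,y) - (A + B*x0 + C*y + D*(x0*y)))) * (b + d*y)
        - (∫ x in x0..x1, (((x-(x0+x1)/2)^2-(x1-x0)^2/4)/2) * pdx (pdx g) (x,y)) * (b + d*y) := by
  have hE : ∀ x : ℝ, HasDerivAt (fun t => g (t,y) - (A + B*t + C*y + D*(t*y)))
      (pdx g (x,y) - (B + D*y)) x := fun x => (sliceX hgd x y).sub (hasDerivAt_polyX A B C D y x)
  have hE' : ∀ x : ℝ, HasDerivAt (fun t => pdx g (t,y) - (B + D*y))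
      (pdx (pdx g) (x,y)) x := fun x => (sliceX hgxd x y).sub_const _
  have hW : ∀ x : ℝ, HasDerivAt (fun t => a + b*t + c*y + d*(t*y)) (b + d*y) x :=
    fun x => hasDerivAt_polyX a b c d y x
  have FTC : ∫ x in x0..x1,
      ((pdx g (x,y) - (B + D*y)) * (a + b*x + c*y + d*(x*y))
        + (g (x,y) - (A + B*x + C*y + D*(x*y))) * (b + d*y))
      = (g (x1,y) - (A + B*x1 + C*y + D*(x1*y))) * (a + b*x1 + c*y + d*(x1*y))
        - (g (x0,y) - (A + B*x0 + C*y + D*(x0*y))) * (a + b*x0 + c*y + d*(x0*y)) := by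
    refine integral_eq_sub_of_hasDerivAt (fun x _ => (hE x).mul (hW x)) ?_
    apply Continuous.intervalIntegrable; fun_prop
  have i1 : IntervalIntegrable
      (fun x => (pdx g (x,y) - (B + D*y)) * (a + b*x + c*y + d*(x*y))) volume x0 x1 := by
    apply Continuous.intervalIntegrable; fun_prop
  have i2 : IntervalIntegrable
      (fun x => (g (x,y) - (A + B*x + C*y + D*(x*y))) * (b + d*y)) volume x0 x1 := by
    apply Continuous.intervalIntegrable; fun_prop
  rw [integral_add i1 i2] at FTC
  have hS : ∫ x in x0..x1, (g (x,y) - (A + B*x + C*y + D*(x*y))) * (b + d*y)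
      = (∫ x in x0..x1, (g (x,y) - (A + B*x + C*y + D*(x*y)))) * (b + d*y) :=
    intervalIntegral.integral_mul_const _ _
  have IL : (∫ x in x0..x1, (g (x,y) - (A + B*x + C*y + D*(x*y))))
      = (∫ x in x0..x1, (((x-(x0+x1)/2)^2-(x1-x0)^2/4)/2) * pdx (pdx g) (x,y))
        + (x1-x0)/2 * ((g (x1,y) - (A + B*x1 + C*y + D*(x1*y)))
            + (g (x0,y) - (A + B*x0 + C*y + D*(x0*y)))) := by
    exact interior_lemma x0 x1 _ _ _ hE hE' (by fun_prop) (by fun_prop)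
  linear_combination FTC - (b + d*y) * IL - hS
lemma S5lem (x0 x1 y0 y1 a b c d y : ℝ) (g : ℝ×ℝ→ℝ)
    (h02d : Differentiable ℝ (pdy (pdy g)))
    (hc02 : Continuous (pdy (pdy g))) (hc12 : Continuous (pdx (pdy (pdy g)))) :
    (((y-(y0+y1)/2)^2-(y1-y0)^2/4)/2) * pdy (pdy g) (x1,y)
        * ((a + b*x1 + (c+d*x1)*((y0+y1)/2)) + (c+d*x1)/3*(y-(y0+y1)/2))
      - (((y-(y0+y1)/2)^2-(y1-y0)^2/4)/2) * pdy (pdy g) (x0,y)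
        * ((a + b*x0 + (c+d*x0)*((y0+y1)/2)) + (c+d*x0)/3*(y-(y0+y1)/2))
      - (x1-x0)/2 * ((((y-(y0+y1)/2)^2-(y1-y0)^2/4)/2) * pdy (pdy g) (x1,y)
            * ((b + d*((y0+y1)/2)) + d/3*(y-(y0+y1)/2))
          + (((y-(y0+y1)/2)^2-(y1-y0)^2/4)/2) * pdy (pdy g) (x0,y)
            * ((b + d*((y0+y1)/2)) + d/3*(y-(y0+y1)/2)))
      = ∫ x in x0..x1, (((y-(y0+y1)/2)^2-(y1-y0)^2/4)/2) * pdx (pdy (pdy g)) (x,y)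
          * ((a + b*x + c*y + d*(x*y)) - (x-(x0+x1)/2)*(b+d*y)
              - 2/3*(y-(y0+y1)/2)*(c+d*x) + 2/3*(x-(x0+x1)/2)*(y-(y0+y1)/2)*d) := by
  set Jy := (((y-(y0+y1)/2)^2-(y1-y0)^2/4)/2) with hJy
  have hq : ∀ x : ℝ, HasDerivAt (fun t => pdy (pdy g) (t,y)) (pdx (pdy (pdy g)) (x,y)) x :=
    fun x => sliceX h02d x y
  have hAA : ∀ x : ℝ, HasDerivAt
      (fun t => a + b*t + c*y + d*(t*y) - 2/3*(y-(y0+y1)/2)*(c+d*t))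
      (b + d*y - 2/3*(y-(y0+y1)/2)*d) x := fun x =>
    (hasDerivAt_polyX a b c d y x).sub ((hasDerivAt_linear c d x).const_mul (2/3*(y-(y0+y1)/2)))
  have FTC5 : ∫ x in x0..x1,
      (Jy * pdx (pdy (pdy g)) (x,y)
          * (a + b*x + c*y + d*(x*y) - 2/3*(y-(y0+y1)/2)*(c+d*x))
        + Jy * pdy (pdy g) (x,y) * (b + d*y - 2/3*(y-(y0+y1)/2)*d))
      = Jy * pdy (pdy g) (x1,y) * (a + b*x1 + c*y + d*(x1*y) - 2/3*(y-(y0+y1)/2)*(c+d*x1))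
        - Jy * pdy (pdy g) (x0,y) * (a + b*x0 + c*y + d*(x0*y) - 2/3*(y-(y0+y1)/2)*(c+d*x0)) := by
    refine integral_eq_sub_of_hasDerivAt (fun x _ => ((hq x).const_mul Jy).mul (hAA x)) ?_
    apply Continuous.intervalIntegrable; fun_prop
  have TR : (x1-x0)/2 * (pdy (pdy g) (x1,y) + pdy (pdy g) (x0,y))
      = (∫ x in x0..x1, pdy (pdy g) (x,y))
        + ∫ x in x0..x1, (x-(x0+x1)/2) * pdx (pdy (pdy g)) (x,y) :=
    trapezoid x0 x1 _ _ hq (by fun_prop)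
  have iA : IntervalIntegrable (fun x => Jy * pdx (pdy (pdy g)) (x,y)
      * (a + b*x + c*y + d*(x*y) - 2/3*(y-(y0+y1)/2)*(c+d*x))) volume x0 x1 := by
    apply Continuous.intervalIntegrable; fun_prop
  have iB : IntervalIntegrable (fun x => Jy * pdy (pdy g) (x,y)
      * (b + d*y - 2/3*(y-(y0+y1)/2)*d)) volume x0 x1 := by
    apply Continuous.intervalIntegrable; fun_prop
  rw [integral_add iA iB] at FTC5
  have hT2 : ∫ x in x0..x1, Jy * pdy (pdy g) (x,y) * (b + d*y - 2/3*(y-(y0+y1)/2)*d)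
      = (Jy * (b + d*y - 2/3*(y-(y0+y1)/2)*d)) * ∫ x in x0..x1, pdy (pdy g) (x,y) := by
    rw [← intervalIntegral.integral_const_mul]
    apply integral_congr; intro t _; ring
  have hR : ∫ x in x0..x1, Jy * pdx (pdy (pdy g)) (x,y)
          * ((a + b*x + c*y + d*(x*y)) - (x-(x0+x1)/2)*(b+d*y)
              - 2/3*(y-(y0+y1)/2)*(c+d*x) + 2/3*(x-(x0+x1)/2)*(y-(y0+y1)/2)*d)
      = (∫ x in x0..x1, Jy * pdx (pdy (pdy g)) (x,y)
            * (a + b*x + c*y + d*(x*y) - 2/3*(y-(y0+y1)/2)*(c+d*x)))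
        - (Jy * (b + d*y - 2/3*(y-(y0+y1)/2)*d))
            * ∫ x in x0..x1, (x-(x0+x1)/2) * pdx (pdy (pdy g)) (x,y) := by
    rw [← intervalIntegral.integral_const_mul, ← intervalIntegral.integral_sub iA (by
      apply Continuous.intervalIntegrable; fun_prop)]
    apply integral_congr; intro t _; ring
  linear_combination -hR - FTC5 + hT2 - (Jy * (b + d*y - 2/3*(y-(y0+y1)/2)*d)) * TR

lemma S6lem (x0 x1 y0 y1 a b c d y : ℝ) (g : ℝ×ℝ→ℝ)
    (hg2d : Differentiable ℝ (pdx (pdx g)))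
    (hc2 : Continuous (pdx (pdx g))) (hc3 : Continuous (pdx (pdx (pdx g))))
    (hc12 : Continuous (pdx (pdy (pdy g)))) :
    (∫ x in x0..x1,
        (1/3 * (((x-(x0+x1)/2)^2-(x1-x0)^2/4)/2) * (x-(x0+x1)/2) * pdx (pdx (pdx g)) (x,y)
            * (b + d*y)
          - (x1-x0)^2/12 * pdx (pdx (pdx g)) (x,y) * (a + b*x + c*y + d*(x*y))
          + (((y-(y0+y1)/2)^2-(y1-y0)^2/4)/2) * pdx (pdy (pdy g)) (x,y)
              * ((a + b*x + c*y + d*(x*y)) - (x-(x0+x1)/2)*(b+d*y)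
                  - 2/3*(y-(y0+y1)/2)*(c+d*x) + 2/3*(x-(x0+x1)/2)*(y-(y0+y1)/2)*d)))
      + (x1-x0)^2/12 * (pdx (pdx g) (x1,y) * (a + b*x1 + c*y + d*(x1*y))
          - pdx (pdx g) (x0,y) * (a + b*x0 + c*y + d*(x0*y)))
      = (∫ x in x0..x1, (((y-(y0+y1)/2)^2-(y1-y0)^2/4)/2) * pdx (pdy (pdy g)) (x,y)
          * ((a + b*x + c*y + d*(x*y)) - (x-(x0+x1)/2)*(b+d*y)
              - 2/3*(y-(y0+y1)/2)*(c+d*x) + 2/3*(x-(x0+x1)/2)*(y-(y0+y1)/2)*d))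
        - (∫ x in x0..x1, (((x-(x0+x1)/2)^2-(x1-x0)^2/4)/2) * pdx (pdx g) (x,y)) * (b + d*y) := by
  have SB : ∫ x in x0..x1,
      1/3 * (((x-(x0+x1)/2)^2-(x1-x0)^2/4)/2) * (x-(x0+x1)/2) * pdx (pdx (pdx g)) (x,y)
      = -∫ x in x0..x1,
          ((((x-(x0+x1)/2)^2-(x1-x0)^2/4)/2) + (x1-x0)^2/12) * pdx (pdx g) (x,y) :=
    stepB x0 x1 _ _ (fun x => sliceX hg2d x y) (by fun_prop)
  have FTC7 : ∫ x in x0..x1,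
      (pdx (pdx (pdx g)) (x,y) * (a + b*x + c*y + d*(x*y)) + pdx (pdx g) (x,y) * (b + d*y))
      = pdx (pdx g) (x1,y) * (a + b*x1 + c*y + d*(x1*y))
        - pdx (pdx g) (x0,y) * (a + b*x0 + c*y + d*(x0*y)) := by
    refine integral_eq_sub_of_hasDerivAt
      (fun x _ => (sliceX hg2d x y).mul (hasDerivAt_polyX a b c d y x)) ?_
    apply Continuous.intervalIntegrable; fun_prop
  have i1 : IntervalIntegrable (fun x =>
      1/3 * (((x-(x0+x1)/2)^2-(x1-x0)^2/4)/2) * (x-(x0+x1)/2) * pdx (pdx (pdx g)) (x,y)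
        * (b + d*y)) volume x0 x1 := by apply Continuous.intervalIntegrable; fun_prop
  have i2 : IntervalIntegrable (fun x =>
      (x1-x0)^2/12 * pdx (pdx (pdx g)) (x,y) * (a + b*x + c*y + d*(x*y))) volume x0 x1 := by
    apply Continuous.intervalIntegrable; fun_prop
  have i3 : IntervalIntegrable (fun x =>
      (((y-(y0+y1)/2)^2-(y1-y0)^2/4)/2) * pdx (pdy (pdy g)) (x,y)
        * ((a + b*x + c*y + d*(x*y)) - (x-(x0+x1)/2)*(b+d*y)
            - 2/3*(y-(y0+y1)/2)*(c+d*x) + 2/3*(x-(x0+x1)/2)*(y-(y0+y1)/2)*d)) volume x0 x1 := by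
    apply Continuous.intervalIntegrable; fun_prop
  have i4 : IntervalIntegrable (fun x =>
      pdx (pdx (pdx g)) (x,y) * (a + b*x + c*y + d*(x*y))) volume x0 x1 := by
    apply Continuous.intervalIntegrable; fun_prop
  have i5 : IntervalIntegrable (fun x =>
      pdx (pdx g) (x,y) * (b + d*y)) volume x0 x1 := by
    apply Continuous.intervalIntegrable; fun_prop
  rw [integral_add ((i1.sub i2)) i3, integral_sub i1 i2, integral_add i4 i5] at *
  have h1 : ∫ x in x0..x1,
      1/3 * (((x-(x0+x1)/2)^2-(x1-x0)^2/4)/2) * (x-(x0+x1)/2) * pdx (pdx (pdx g)) (x,y)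
        * (b + d*y)
      = (∫ x in x0..x1,
          1/3 * (((x-(x0+x1)/2)^2-(x1-x0)^2/4)/2) * (x-(x0+x1)/2) * pdx (pdx (pdx g)) (x,y))
        * (b + d*y) := intervalIntegral.integral_mul_const _ _
  have h2 : ∫ x in x0..x1,
      (x1-x0)^2/12 * pdx (pdx (pdx g)) (x,y) * (a + b*x + c*y + d*(x*y))
      = (x1-x0)^2/12 * ∫ x in x0..x1, pdx (pdx (pdx g)) (x,y) * (a + b*x + c*y + d*(x*y)) := by
    rw [← intervalIntegral.integral_const_mul]
    apply integral_congr; intro t _; ring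
  have h3 : ∫ x in x0..x1,
      ((((x-(x0+x1)/2)^2-(x1-x0)^2/4)/2) + (x1-x0)^2/12) * pdx (pdx g) (x,y)
      = (∫ x in x0..x1, (((x-(x0+x1)/2)^2-(x1-x0)^2/4)/2) * pdx (pdx g) (x,y))
        + (x1-x0)^2/12 * ∫ x in x0..x1, pdx (pdx g) (x,y) := by
    rw [← intervalIntegral.integral_const_mul, ← intervalIntegral.integral_add (by
      apply Continuous.intervalIntegrable; fun_prop) (by
      apply Continuous.intervalIntegrable; fun_prop)]
    apply integral_congr; intro t _; ring
  have h4 : ∫ x in x0..x1, pdx (pdx g) (x,y) * (b + d*y)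
      = (∫ x in x0..x1, pdx (pdx g) (x,y)) * (b + d*y) :=
    intervalIntegral.integral_mul_const _ _
  rw [h3] at SB
  linear_combination h1 + (b + d*y) * SB - h2 - (x1-x0)^2/12 * FTC7 + (x1-x0)^2/12 * h4

lemma pdx_lin (c d : ℝ) : pdx (fun p : ℝ×ℝ => c + d*p.1) = fun _ => d := by
  funext p
  have h1 := sliceX (f := fun p : ℝ×ℝ => c + d*p.1) (by fun_prop) p.1 p.2
  have h2 : HasDerivAt (fun t : ℝ => c + d*t) d p.1 := hasDerivAt_linear c d p.1
  have := h1.unique h2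
  simpa using this

lemma pdx_sub_poly (g : ℝ×ℝ→ℝ) (hgd : Differentiable ℝ g) (A2 B2 C2 D2 : ℝ) :
    pdx (fun q : ℝ×ℝ => g q - (fun p : ℝ×ℝ => A2 + B2*p.1 + C2*p.2 + D2*(p.1*p.2)) q)
      = fun p : ℝ×ℝ => pdx g p - (B2 + D2*p.2) := by
  funext p
  have hd2 : DifferentiableAt ℝ (fun q : ℝ×ℝ => A2 + B2*q.1 + C2*q.2 + D2*(q.1*q.2)) p := by
    fun_prop
  show fderiv ℝ _ p (1,0) = _
  rw [fderiv_fun_sub (hgd p) hd2]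
  have h2 : fderiv ℝ (fun q : ℝ×ℝ => A2 + B2*q.1 + C2*q.2 + D2*(q.1*q.2)) p (1,0)
      = B2 + D2*p.2 := congrFun (pdx_poly A2 B2 C2 D2) p
  rw [ContinuousLinearMap.sub_apply, h2]
  rfl



/-- Lin identity (c): for `g ∈ C³(τ)` with bilinear interpolant `g^I` on the rectangle
`τ = [x₀,x₁]×[y₀,y₁]` and any bilinear `w`,
`∫_τ (g−g^I)_x w = ∫_τ R(g,w) + (h_x²/12)(∫_{l₂} g_{xx} w dy − ∫_{l₄} g_{xx} w dy)`,
where `l₂`, `l₄` are the right and left edges, `F_τ(x) = ((x−x_τ)² − h_x²/4)/2`,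
`J_τ(y) = ((y−y_τ)² − h_y²/4)/2`, and
`R(g,w) = (1/3) F_τ(x)(x−x_τ) g_{xxx} w_x − (h_x²/12) g_{xxx} w
 + J_τ(y) g_{xyy} [w − (x−x_τ) w_x − (2/3)(y−y_τ) w_y + (2/3)(x−x_τ)(y−y_τ) w_{xy}]`. -/
theorem lin_identity_c (x0 x1 y0 y1 : ℝ) (hx : x0 < x1) (hy : y0 < y1)
    (g gI w : ℝ × ℝ → ℝ) (hg : ContDiff ℝ 3 g)
    (hgIbil : IsBilinear gI)
    (h00 : gI (x0, y0) = g (x0, y0)) (h10 : gI (x1, y0) = g (x1, y0))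
    (h01 : gI (x0, y1) = g (x0, y1)) (h11 : gI (x1, y1) = g (x1, y1))
    (hwbil : IsBilinear w) :
    ∫ p in Icc x0 x1 ×ˢ Icc y0 y1, pdx (fun q => g q - gI q) p * w p
      = (∫ p in Icc x0 x1 ×ˢ Icc y0 y1,
          (1 / 3 * (((p.1 - (x0 + x1) / 2) ^ 2 - (x1 - x0) ^ 2 / 4) / 2) *
              (p.1 - (x0 + x1) / 2) * pd 3 0 g p * pdx w p
            - (x1 - x0) ^ 2 / 12 * pd 3 0 g p * w p
            + (((p.2 - (y0 + y1) / 2) ^ 2 - (y1 - y0) ^ 2 / 4) / 2) * pd 1 2 g p *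
              (w p - (p.1 - (x0 + x1) / 2) * pdx w p
                - 2 / 3 * (p.2 - (y0 + y1) / 2) * pdy w p
                + 2 / 3 * (p.1 - (x0 + x1) / 2) * (p.2 - (y0 + y1) / 2) * pd 1 1 w p)))
        + (x1 - x0) ^ 2 / 12 *
            ((∫ y in y0..y1, pd 2 0 g (x1, y) * w (x1, y))
              - ∫ y in y0..y1, pd 2 0 g (x0, y) * w (x0, y)) := by
  obtain ⟨a, b, c, d, hw⟩ := hwbil
  obtain ⟨A2, B2, C2, D2, hgi⟩ := hgIbil
  have hwf : w = fun p : ℝ×ℝ => a + b*p.1 + c*p.2 + d*(p.1*p.2) := funext hw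
  have hgif : gI = fun p : ℝ×ℝ => A2 + B2*p.1 + C2*p.2 + D2*(p.1*p.2) := funext hgi
  subst hwf hgif
  have hgd : Differentiable ℝ g := hg.differentiable (by norm_num)
  have hgx2 : ContDiff ℝ 2 (pdx g) := contDiff_pdx_s2 (n := 2) (by exact_mod_cast hg)
  have hgy2 : ContDiff ℝ 2 (pdy g) := contDiff_pdy_s2 (n := 2) (by exact_mod_cast hg)
  have hg20 : ContDiff ℝ 1 (pdx (pdx g)) := contDiff_pdx_s2 (n := 1) (by exact_mod_cast hgx2)
  have hg02 : ContDiff ℝ 1 (pdy (pdy g)) := contDiff_pdy_s2 (n := 1) (by exact_mod_cast hgy2)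
  have cg : Continuous g := hg.continuous
  have cgx : Continuous (pdx g) := hgx2.continuous
  have cgy : Continuous (pdy g) := hgy2.continuous
  have cg2 : Continuous (pdx (pdx g)) := hg20.continuous
  have cg3 : Continuous (pdx (pdx (pdx g))) :=
    (contDiff_pdx_s2 (n := 0) (by exact_mod_cast hg20)).continuous
  have cg02 : Continuous (pdy (pdy g)) := hg02.continuous
  have cg12 : Continuous (pdx (pdy (pdy g))) :=
    (contDiff_pdx_s2 (n := 0) (by exact_mod_cast hg02)).continuous
  have dgx : Differentiable ℝ (pdx g) := hgx2.differentiable (by norm_num)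
  have dgy : Differentiable ℝ (pdy g) := hgy2.differentiable (by norm_num)
  have dg2 : Differentiable ℝ (pdx (pdx g)) := hg20.differentiable (by norm_num)
  have dg02 : Differentiable ℝ (pdy (pdy g)) := hg02.differentiable (by norm_num)
  have k00 : g (x0,y0) - (A2 + B2*x0 + C2*y0 + D2*(x0*y0)) = 0 := by
    have h : A2 + B2*x0 + C2*y0 + D2*(x0*y0) = g (x0,y0) := h00
    linarith
  have k10 : g (x1,y0) - (A2 + B2*x1 + C2*y0 + D2*(x1*y0)) = 0 := by
    have h : A2 + B2*x1 + C2*y0 + D2*(x1*y0) = g (x1,y0) := h10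
    linarith
  have k01 : g (x0,y1) - (A2 + B2*x0 + C2*y1 + D2*(x0*y1)) = 0 := by
    have h : A2 + B2*x0 + C2*y1 + D2*(x0*y1) = g (x0,y1) := h01
    linarith
  have k11 : g (x1,y1) - (A2 + B2*x1 + C2*y1 + D2*(x1*y1)) = 0 := by
    have h : A2 + B2*x1 + C2*y1 + D2*(x1*y1) = g (x1,y1) := h11
    linarith
  have e30 : pd 3 0 g = pdx (pdx (pdx g)) := rfl
  have e20 : pd 2 0 g = pdx (pdx g) := rfl
  have e12 : pd 1 2 g = pdx (pdy (pdy g)) := rfl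
  have e11 : pd 1 1 (fun p : ℝ×ℝ => a + b*p.1 + c*p.2 + d*(p.1*p.2)) = fun _ : ℝ×ℝ => d := by
    show pdx (pdy (fun p : ℝ×ℝ => a + b*p.1 + c*p.2 + d*(p.1*p.2))) = _
    rw [pdy_poly, pdx_lin]
  have epdx : pdx (fun p : ℝ×ℝ => a + b*p.1 + c*p.2 + d*(p.1*p.2))
      = fun p : ℝ×ℝ => b + d*p.2 := pdx_poly a b c d
  have epdy : pdy (fun p : ℝ×ℝ => a + b*p.1 + c*p.2 + d*(p.1*p.2))
      = fun p : ℝ×ℝ => c + d*p.1 := pdy_poly a b c d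
  have epdxe : pdx (fun q : ℝ×ℝ => g q - (fun p : ℝ×ℝ => A2 + B2*p.1 + C2*p.2 + D2*(p.1*p.2)) q)
      = fun p : ℝ×ℝ => pdx g p - (B2 + D2*p.2) := pdx_sub_poly g hgd A2 B2 C2 D2
  simp only [e30, e20, e12, e11, epdx, epdy, epdxe]
  -- edge derivative packages
  have hev : ∀ x' t : ℝ, HasDerivAt (fun s => g (x',s) - (A2 + B2*x' + C2*s + D2*(x'*s)))
      (pdy g (x',t) - (C2 + D2*x')) t :=
    fun x' t => (sliceY hgd x' t).sub (hasDerivAt_polyY A2 B2 C2 D2 x' t)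
  have hev' : ∀ x' t : ℝ, HasDerivAt (fun s => pdy g (x',s) - (C2 + D2*x'))
      (pdy (pdy g) (x',t)) t := fun x' t => (sliceY dgy x' t).sub_const _
  have hcev' : ∀ x' : ℝ, Continuous (fun s => pdy g (x',s) - (C2 + D2*x')) := by
    intro x'; fun_prop
  have hcq : ∀ x' : ℝ, Continuous (fun s => pdy (pdy g) (x',s)) := by intro x'; fun_prop
  -- LHS chain
  have LHSeq : (∫ p in Icc x0 x1 ×ˢ Icc y0 y1,
        (pdx g p - (B2 + D2*p.2)) * (a + b*p.1 + c*p.2 + d*(p.1*p.2)))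
      = (∫ y in y0..y1, ∫ x in x0..x1, (((y-(y0+y1)/2)^2-(y1-y0)^2/4)/2) * pdx (pdy (pdy g)) (x,y) * ((a + b*x + c*y + d*(x*y)) - (x-(x0+x1)/2)*(b+d*y) - 2/3*(y-(y0+y1)/2)*(c+d*x) + 2/3*(x-(x0+x1)/2)*(y-(y0+y1)/2)*d)) - ∫ y in y0..y1, (∫ x in x0..x1, (((x-(x0+x1)/2)^2-(x1-x0)^2/4)/2) * pdx (pdx g) (x,y)) * (b + d*y) := by
    have E1 : (∫ y in y0..y1, (g (x1,y) - (A2 + B2*x1 + C2*y + D2*(x1*y))) * (a + b*x1 + c*y + d*(x1*y))) = ∫ y in y0..y1, (((y-(y0+y1)/2)^2-(y1-y0)^2/4)/2) * pdy (pdy g) (x1,y) * ((a + b*x1 + (c+d*x1)*((y0+y1)/2)) + (c+d*x1)/3*(y-(y0+y1)/2)) := by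
      have step1 : (∫ y in y0..y1, (g (x1,y) - (A2 + B2*x1 + C2*y + D2*(x1*y))) * (a + b*x1 + c*y + d*(x1*y)))
          = ∫ y in y0..y1, (g (x1,y) - (A2 + B2*x1 + C2*y + D2*(x1*y))) * ((a + b*x1 + (c+d*x1)*((y0+y1)/2)) + (c+d*x1)*(y-(y0+y1)/2)) := by
        apply integral_congr; intro t _; ring
      rw [step1]
      exact edge_lemma y0 y1 _ _ _ _ _ (hev x1) (hev' x1) (hcev' x1) (hcq x1) k10 k11
    have E0 : (∫ y in y0..y1, (g (x0,y) - (A2 + B2*x0 + C2*y + D2*(x0*y))) * (a + b*x0 + c*y + d*(x0*y))) = ∫ y in y0..y1, (((y-(y0+y1)/2)^2-(y1-y0)^2/4)/2) * pdy (pdy g) (x0,y) * ((a + b*x0 + (c+d*x0)*((y0+y1)/2)) + (c+d*x0)/3*(y-(y0+y1)/2)) := by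
      have step1 : (∫ y in y0..y1, (g (x0,y) - (A2 + B2*x0 + C2*y + D2*(x0*y))) * (a + b*x0 + c*y + d*(x0*y)))
          = ∫ y in y0..y1, (g (x0,y) - (A2 + B2*x0 + C2*y + D2*(x0*y))) * ((a + b*x0 + (c+d*x0)*((y0+y1)/2)) + (c+d*x0)*(y-(y0+y1)/2)) := by
        apply integral_congr; intro t _; ring
      rw [step1]
      exact edge_lemma y0 y1 _ _ _ _ _ (hev x0) (hev' x0) (hcev' x0) (hcq x0) k00 k01
    have E3 : (∫ y in y0..y1, (x1-x0)/2 * ((g (x1,y) - (A2 + B2*x1 + C2*y + D2*(x1*y))) + (g (x0,y) - (A2 + B2*x0 + C2*y + D2*(x0*y)))) * (b + d*y))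
        = (x1-x0)/2 * ((∫ y in y0..y1, (((y-(y0+y1)/2)^2-(y1-y0)^2/4)/2) * pdy (pdy g) (x1,y) * ((b + d*((y0+y1)/2)) + d/3*(y-(y0+y1)/2))) + ∫ y in y0..y1, (((y-(y0+y1)/2)^2-(y1-y0)^2/4)/2) * pdy (pdy g) (x0,y) * ((b + d*((y0+y1)/2)) + d/3*(y-(y0+y1)/2))) := by
      have s1 : (∫ y in y0..y1, (x1-x0)/2 * ((g (x1,y) - (A2 + B2*x1 + C2*y + D2*(x1*y))) + (g (x0,y) - (A2 + B2*x0 + C2*y + D2*(x0*y)))) * (b + d*y))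
          = ∫ y in y0..y1, (x1-x0)/2 * ((g (x1,y) - (A2 + B2*x1 + C2*y + D2*(x1*y))) * ((b + d*((y0+y1)/2)) + d*(y-(y0+y1)/2))
              + (g (x0,y) - (A2 + B2*x0 + C2*y + D2*(x0*y))) * ((b + d*((y0+y1)/2)) + d*(y-(y0+y1)/2))) := by
        apply integral_congr; intro t _; ring
      have s2 : (∫ y in y0..y1, (g (x1,y) - (A2 + B2*x1 + C2*y + D2*(x1*y))) * ((b + d*((y0+y1)/2)) + d*(y-(y0+y1)/2)))
          = ∫ y in y0..y1, (((y-(y0+y1)/2)^2-(y1-y0)^2/4)/2) * pdy (pdy g) (x1,y) * ((b + d*((y0+y1)/2)) + d/3*(y-(y0+y1)/2)) :=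
        edge_lemma y0 y1 _ _ _ _ _ (hev x1) (hev' x1) (hcev' x1) (hcq x1) k10 k11
      have s3 : (∫ y in y0..y1, (g (x0,y) - (A2 + B2*x0 + C2*y + D2*(x0*y))) * ((b + d*((y0+y1)/2)) + d*(y-(y0+y1)/2)))
          = ∫ y in y0..y1, (((y-(y0+y1)/2)^2-(y1-y0)^2/4)/2) * pdy (pdy g) (x0,y) * ((b + d*((y0+y1)/2)) + d/3*(y-(y0+y1)/2)) :=
        edge_lemma y0 y1 _ _ _ _ _ (hev x0) (hev' x0) (hcev' x0) (hcq x0) k00 k01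
      rw [s1, intervalIntegral.integral_const_mul, intervalIntegral.integral_add (by apply Continuous.intervalIntegrable; fun_prop) (by apply Continuous.intervalIntegrable; fun_prop), s2, s3]
    have MX : (∫ y in y0..y1, ((((y-(y0+y1)/2)^2-(y1-y0)^2/4)/2) * pdy (pdy g) (x1,y) * ((a + b*x1 + (c+d*x1)*((y0+y1)/2)) + (c+d*x1)/3*(y-(y0+y1)/2)) - (((y-(y0+y1)/2)^2-(y1-y0)^2/4)/2) * pdy (pdy g) (x0,y) * ((a + b*x0 + (c+d*x0)*((y0+y1)/2)) + (c+d*x0)/3*(y-(y0+y1)/2))) - (x1-x0)/2 * ((((y-(y0+y1)/2)^2-(y1-y0)^2/4)/2) * pdy (pdy g) (x1,y) * ((b + d*((y0+y1)/2)) + d/3*(y-(y0+y1)/2)) + (((y-(y0+y1)/2)^2-(y1-y0)^2/4)/2) * pdy (pdy g) (x0,y) * ((b + d*((y0+y1)/2)) + d/3*(y-(y0+y1)/2))))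
        = ((∫ y in y0..y1, (((y-(y0+y1)/2)^2-(y1-y0)^2/4)/2) * pdy (pdy g) (x1,y) * ((a + b*x1 + (c+d*x1)*((y0+y1)/2)) + (c+d*x1)/3*(y-(y0+y1)/2))) - ∫ y in y0..y1, (((y-(y0+y1)/2)^2-(y1-y0)^2/4)/2) * pdy (pdy g) (x0,y) * ((a + b*x0 + (c+d*x0)*((y0+y1)/2)) + (c+d*x0)/3*(y-(y0+y1)/2)))
          - (x1-x0)/2 * ((∫ y in y0..y1, (((y-(y0+y1)/2)^2-(y1-y0)^2/4)/2) * pdy (pdy g) (x1,y) * ((b + d*((y0+y1)/2)) + d/3*(y-(y0+y1)/2))) + ∫ y in y0..y1, (((y-(y0+y1)/2)^2-(y1-y0)^2/4)/2) * pdy (pdy g) (x0,y) * ((b + d*((y0+y1)/2)) + d/3*(y-(y0+y1)/2))) := by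
      rw [intervalIntegral.integral_sub ((by apply Continuous.intervalIntegrable; fun_prop)) (by apply Continuous.intervalIntegrable; fun_prop),
        intervalIntegral.integral_sub (by apply Continuous.intervalIntegrable; fun_prop) (by apply Continuous.intervalIntegrable; fun_prop)]
      congr 1
      rw [← intervalIntegral.integral_add (by apply Continuous.intervalIntegrable; fun_prop) (by apply Continuous.intervalIntegrable; fun_prop), ← intervalIntegral.integral_const_mul]
    have S5 : (∫ y in y0..y1, ((((y-(y0+y1)/2)^2-(y1-y0)^2/4)/2) * pdy (pdy g) (x1,y) * ((a + b*x1 + (c+d*x1)*((y0+y1)/2)) + (c+d*x1)/3*(y-(y0+y1)/2)) - (((y-(y0+y1)/2)^2-(y1-y0)^2/4)/2) * pdy (pdy g) (x0,y) * ((a + b*x0 + (c+d*x0)*((y0+y1)/2)) + (c+d*x0)/3*(y-(y0+y1)/2))) - (x1-x0)/2 * ((((y-(y0+y1)/2)^2-(y1-y0)^2/4)/2) * pdy (pdy g) (x1,y) * ((b + d*((y0+y1)/2)) + d/3*(y-(y0+y1)/2)) + (((y-(y0+y1)/2)^2-(y1-y0)^2/4)/2) * pdy (pdy g) (x0,y)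 * ((b + d*((y0+y1)/2)) + d/3*(y-(y0+y1)/2)))) = ∫ y in y0..y1, ∫ x in x0..x1, (((y-(y0+y1)/2)^2-(y1-y0)^2/4)/2) * pdx (pdy (pdy g)) (x,y) * ((a + b*x + c*y + d*(x*y)) - (x-(x0+x1)/2)*(b+d*y) - 2/3*(y-(y0+y1)/2)*(c+d*x) + 2/3*(x-(x0+x1)/2)*(y-(y0+y1)/2)*d) := by
      apply integral_congr; intro t _
      exact S5lem x0 x1 y0 y1 a b c d t g dg02 cg02 cg12
    calc (∫ p in Icc x0 x1 ×ˢ Icc y0 y1,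
        (pdx g p - (B2 + D2*p.2)) * (a + b*p.1 + c*p.2 + d*(p.1*p.2)))
        = ∫ y in y0..y1, ∫ x in x0..x1,
            (pdx g (x,y) - (B2 + D2*y)) * (a + b*x + c*y + d*(x*y)) :=
          fubini_rect hx.le hy.le (by fun_prop)
      _ = ∫ y in y0..y1, (((g (x1,y) - (A2 + B2*x1 + C2*y + D2*(x1*y))) * (a + b*x1 + c*y + d*(x1*y)) - (g (x0,y) - (A2 + B2*x0 + C2*y + D2*(x0*y))) * (a + b*x0 + c*y + d*(x0*y))) - (x1-x0)/2 * ((g (x1,y) - (A2 + B2*x1 + C2*y + D2*(x1*y))) + (g (x0,y) - (A2 + B2*x0 + C2*y + D2*(x0*y)))) * (b + d*y) - (∫ x in x0..x1, (((x-(x0+x1)/2)^2-(x1-x0)^2/4)/2) * pdx (pdx g) (x,y)) * (b + d*y)) := by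
          apply integral_congr; intro t _
          exact S2lem x0 x1 a b c d A2 B2 C2 D2 t g hgd dgx cg cgx cg2
      _ = ((((∫ y in y0..y1, (g (x1,y) - (A2 + B2*x1 + C2*y + D2*(x1*y))) * (a + b*x1 + c*y + d*(x1*y))) - ∫ y in y0..y1, (g (x0,y) - (A2 + B2*x0 + C2*y + D2*(x0*y))) * (a + b*x0 + c*y + d*(x0*y))) - ∫ y in y0..y1, (x1-x0)/2 * ((g (x1,y) - (A2 + B2*x1 + C2*y + D2*(x1*y))) + (g (x0,y) - (A2 + B2*x0 + C2*y + D2*(x0*y)))) * (b + d*y))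
            - ∫ y in y0..y1, (∫ x in x0..x1, (((x-(x0+x1)/2)^2-(x1-x0)^2/4)/2) * pdx (pdx g) (x,y)) * (b + d*y)) := by
          rw [intervalIntegral.integral_sub ((by apply Continuous.intervalIntegrable; fun_prop)) (by apply Continuous.intervalIntegrable; fun_prop),
            intervalIntegral.integral_sub ((by apply Continuous.intervalIntegrable; fun_prop)) (by apply Continuous.intervalIntegrable; fun_prop),
            intervalIntegral.integral_sub (by apply Continuous.intervalIntegrable; fun_prop) (by apply Continuous.intervalIntegrable; fun_prop)]
      _ = (∫ y in y0..y1, ∫ x in x0..x1, (((y-(y0+y1)/2)^2-(y1-y0)^2/4)/2) * pdx (pdy (pdy g)) (x,y) * ((a + b*x + c*y + d*(x*y)) - (x-(x0+x1)/2)*(b+d*y) - 2/3*(y-(y0+y1)/2)*(c+d*x) + 2/3*(x-(x0+x1)/2)*(y-(y0+y1)/2)*d)) - ∫ y in y0..y1, (∫ x in x0..x1, (((x-(x0+x1)/2)^2-(x1-x0)^2/4)/2) * pdx (pdx g) (x,y)) * (b + d*y) := by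
          rw [E1, E0, E3, ← MX, S5]
  -- RHS chain
  have ER : (x1-x0)^2/12 * ((∫ y in y0..y1, pdx (pdx g) (x1,y) * (a + b*x1 + c*y + d*(x1*y)))
        - ∫ y in y0..y1, pdx (pdx g) (x0,y) * (a + b*x0 + c*y + d*(x0*y)))
      = ∫ y in y0..y1, (x1-x0)^2/12 * (pdx (pdx g) (x1,y) * (a + b*x1 + c*y + d*(x1*y)) - pdx (pdx g) (x0,y) * (a + b*x0 + c*y + d*(x0*y))) := by
    rw [← intervalIntegral.integral_sub (by apply Continuous.intervalIntegrable; fun_prop) (by apply Continuous.intervalIntegrable; fun_prop), ← intervalIntegral.integral_const_mul]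
  have RHSeq : (∫ p in Icc x0 x1 ×ˢ Icc y0 y1,
        (1 / 3 * (((p.1 - (x0 + x1) / 2) ^ 2 - (x1 - x0) ^ 2 / 4) / 2) *
              (p.1 - (x0 + x1) / 2) * pdx (pdx (pdx g)) p * (b + d*p.2)
          - (x1 - x0) ^ 2 / 12 * pdx (pdx (pdx g)) p * (a + b*p.1 + c*p.2 + d*(p.1*p.2))
          + (((p.2 - (y0 + y1) / 2) ^ 2 - (y1 - y0) ^ 2 / 4) / 2) * pdx (pdy (pdy g)) p *
            ((a + b*p.1 + c*p.2 + d*(p.1*p.2)) - (p.1 - (x0 + x1) / 2) * (b + d*p.2)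
              - 2 / 3 * (p.2 - (y0 + y1) / 2) * (c + d*p.1)
              + 2 / 3 * (p.1 - (x0 + x1) / 2) * (p.2 - (y0 + y1) / 2) * d)))
      + (x1 - x0) ^ 2 / 12 *
          ((∫ y in y0..y1, pdx (pdx g) (x1, y) * (a + b*x1 + c*y + d*(x1*y)))
            - ∫ y in y0..y1, pdx (pdx g) (x0, y) * (a + b*x0 + c*y + d*(x0*y)))
      = (∫ y in y0..y1, ∫ x in x0..x1, (((y-(y0+y1)/2)^2-(y1-y0)^2/4)/2) * pdx (pdy (pdy g)) (x,y) * ((a + b*x + c*y + d*(x*y)) - (x-(x0+x1)/2)*(b+d*y) - 2/3*(y-(y0+y1)/2)*(c+d*x) + 2/3*(x-(x0+x1)/2)*(y-(y0+y1)/2)*d)) - ∫ y in y0..y1, (∫ x in x0..x1, (((x-(x0+x1)/2)^2-(x1-x0)^2/4)/2) * pdx (pdx g) (x,y)) * (b + d*y) := by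
    have S6 : (∫ y in y0..y1, ((∫ x in x0..x1, (1 / 3 * (((x-(x0+x1)/2)^2-(x1-x0)^2/4)/2) * (x-(x0+x1)/2) * pdx (pdx (pdx g)) (x,y) * (b + d*y) - (x1-x0)^2/12 * pdx (pdx (pdx g)) (x,y) * (a + b*x + c*y + d*(x*y)) + (((y-(y0+y1)/2)^2-(y1-y0)^2/4)/2) * pdx (pdy (pdy g)) (x,y) * ((a + b*x + c*y + d*(x*y)) - (x-(x0+x1)/2)*(b+d*y) - 2/3*(y-(y0+y1)/2)*(c+d*x) + 2/3*(x-(x0+x1)/2)*(y-(y0+y1)/2)*d))) + (x1-x0)^2/12 * (pdx (pdx g) (x1,y) * (a + b*x1 + c*y + d*(x1*y)) - pdx (pdx g) (x0,y) * (a + b*x0 + c*y + d*(x0*y)))))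
        = ∫ y in y0..y1, ((∫ x in x0..x1, (((y-(y0+y1)/2)^2-(y1-y0)^2/4)/2) * pdx (pdy (pdy g)) (x,y) * ((a + b*x + c*y + d*(x*y)) - (x-(x0+x1)/2)*(b+d*y) - 2/3*(y-(y0+y1)/2)*(c+d*x) + 2/3*(x-(x0+x1)/2)*(y-(y0+y1)/2)*d)) - (∫ x in x0..x1, (((x-(x0+x1)/2)^2-(x1-x0)^2/4)/2) * pdx (pdx g) (x,y)) * (b + d*y)) := by
      apply integral_congr; intro t _
      exact S6lem x0 x1 y0 y1 a b c d t g dg2 cg2 cg3 cg12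
    have iRR : IntervalIntegrable (fun y => ∫ x in x0..x1, (1 / 3 * (((x-(x0+x1)/2)^2-(x1-x0)^2/4)/2) * (x-(x0+x1)/2) * pdx (pdx (pdx g)) (x,y) * (b + d*y) - (x1-x0)^2/12 * pdx (pdx (pdx g)) (x,y) * (a + b*x + c*y + d*(x*y)) + (((y-(y0+y1)/2)^2-(y1-y0)^2/4)/2) * pdx (pdy (pdy g)) (x,y) * ((a + b*x + c*y + d*(x*y)) - (x-(x0+x1)/2)*(b+d*y) - 2/3*(y-(y0+y1)/2)*(c+d*x) + 2/3*(x-(x0+x1)/2)*(y-(y0+y1)/2)*d))) volume y0 y1 := (by apply Continuous.intervalIntegrable; fun_prop)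
    have iJB : IntervalIntegrable (fun y => ∫ x in x0..x1, (((y-(y0+y1)/2)^2-(y1-y0)^2/4)/2) * pdx (pdy (pdy g)) (x,y) * ((a + b*x + c*y + d*(x*y)) - (x-(x0+x1)/2)*(b+d*y) - 2/3*(y-(y0+y1)/2)*(c+d*x) + 2/3*(x-(x0+x1)/2)*(y-(y0+y1)/2)*d)) volume y0 y1 := (by apply Continuous.intervalIntegrable; fun_prop)
    have if4 : IntervalIntegrable (fun y => (∫ x in x0..x1, (((x-(x0+x1)/2)^2-(x1-x0)^2/4)/2) * pdx (pdx g) (x,y)) * (b + d*y)) volume y0 y1 := (by apply Continuous.intervalIntegrable; fun_prop)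
    have FB : (∫ p in Icc x0 x1 ×ˢ Icc y0 y1,
        (1 / 3 * (((p.1 - (x0 + x1) / 2) ^ 2 - (x1 - x0) ^ 2 / 4) / 2) *
              (p.1 - (x0 + x1) / 2) * pdx (pdx (pdx g)) p * (b + d*p.2)
          - (x1 - x0) ^ 2 / 12 * pdx (pdx (pdx g)) p * (a + b*p.1 + c*p.2 + d*(p.1*p.2))
          + (((p.2 - (y0 + y1) / 2) ^ 2 - (y1 - y0) ^ 2 / 4) / 2) * pdx (pdy (pdy g)) p *
            ((a + b*p.1 + c*p.2 + d*(p.1*p.2)) - (p.1 - (x0 + x1) / 2) * (b + d*p.2)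
              - 2 / 3 * (p.2 - (y0 + y1) / 2) * (c + d*p.1)
              + 2 / 3 * (p.1 - (x0 + x1) / 2) * (p.2 - (y0 + y1) / 2) * d)))
        = ∫ y in y0..y1, ∫ x in x0..x1, (1 / 3 * (((x-(x0+x1)/2)^2-(x1-x0)^2/4)/2) * (x-(x0+x1)/2) * pdx (pdx (pdx g)) (x,y) * (b + d*y) - (x1-x0)^2/12 * pdx (pdx (pdx g)) (x,y) * (a + b*x + c*y + d*(x*y)) + (((y-(y0+y1)/2)^2-(y1-y0)^2/4)/2) * pdx (pdy (pdy g)) (x,y) * ((a + b*x + c*y + d*(x*y)) - (x-(x0+x1)/2)*(b+d*y) - 2/3*(y-(y0+y1)/2)*(c+d*x) + 2/3*(x-(x0+x1)/2)*(y-(y0+y1)/2)*d)) :=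
      fubini_rect hx.le hy.le (by fun_prop)
    rw [FB, ER, ← intervalIntegral.integral_add iRR (by apply Continuous.intervalIntegrable; fun_prop), S6,
      intervalIntegral.integral_sub iJB if4]
  exact LHSeq.trans RHSeq.symm
end
end
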